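/- In the convex complete graph K_7: (a) if F is the set of edges ofreach the 7-cycle v_0v_2v_4v_6v_1v_3v_5v_0, then K_7 − F admits no triangulation; (b) if F is the set of edges of the 7-cycle v_0v_3v_6v_2v_5v_1v_4v_0, then K_7 − F admits no triangulation; (c) if F is the set of edges of the 7-cycle v_0v_2v_6v_4v_1v_3v_5v_0, then K_7 − F admits a triangulation, and indeed {v_6v_1, v_1v_5, v_5v_2, v_2v_4} is a set of 4 pairwise non-crossing diagonals disjoint from F. -/

import Mathlib

namespace ConvexTri

/-- `x` lies strictly inside the open arc from `a` to `b` (in the positive cyclic direction). -/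
def InOpenArc (n : ℕ) (a b x : ZMod n) : Prop :=
  0 < (x - a).val ∧ (x - a).val < (b - a).val

/-- Two chords of the convex `n`-gon cross: the endpoints of one separate the endpoints of
the other on the cycle, i.e. exactly one endpoint of the second chord lies in each of the two
open arcs determined by the endpoints of the first chord. -/
def Cross (n : ℕ) (e f : Sym2 (ZMod n)) : Prop :=
  ∃ a b c d : ZMod n, e = s(a, b) ∧ f = s(c, d) ∧
    InOpenArc n a b c ∧ InOpenArc n b a d

/-- Boundary edge of the convex `n`-gon. -/
def IsBoundary (n : ℕ) (e : Sym2 (ZMod n)) : Prop :=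
  ∃ i : ZMod n, e = s(i, i + 1)

/-- A diagonal: an edge of `K_n` (a pair of distinct vertices) that is not a boundary edge. -/
def IsDiagonal (n : ℕ) (e : Sym2 (ZMod n)) : Prop :=
  ¬ e.IsDiag ∧ ¬ IsBoundary n e

/-- `K_n - F` admits a triangulation: `F` contains no boundary edge and there is a set of
`n - 3` pairwise non-crossing diagonals disjoint from `F`. -/
def AdmitsTriangulation (n : ℕ) (F : Finset (Sym2 (ZMod n))) : Prop :=
  (∀ e ∈ F, ¬ IsBoundary n e) ∧
  ∃ T : Finset (Sym2 (ZMod n)), T.card = n - 3 ∧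
    (∀ e ∈ T, IsDiagonal n e) ∧
    (∀ e ∈ T, ∀ f ∈ T, ¬ Cross n e f) ∧
    (∀ e ∈ T, e ∉ F)

/-- Degree of a vertex in an edge set. -/
def deg (n : ℕ) (F : Finset (Sym2 (ZMod n))) (v : ZMod n) : ℕ :=
  (F.filter (fun e => v ∈ e)).card

/-- A pendant vertex of `F` is a vertex of degree 1. -/
def Pendant (n : ℕ) (F : Finset (Sym2 (ZMod n))) (v : ZMod n) : Prop :=
  deg n F v = 1

/-- `F` has no isolated vertices. -/
def NoIsolated (n : ℕ) (F : Finset (Sym2 (ZMod n))) : Prop :=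
  ∀ v : ZMod n, 0 < deg n F v

/-- A relabeling of the vertices by a rotation and possibly a reflection of the cyclic order. -/
def IsDihedral (n : ℕ) (φ : ZMod n → ZMod n) : Prop :=
  (∃ c : ZMod n, φ = fun x => c + x) ∨ (∃ c : ZMod n, φ = fun x => c - x)

/-- The explicit shape of the configuration `F_n(*)` (before relabeling). -/
def FStarShape (n : ℕ) (F : Finset (Sym2 (ZMod n))) : Prop :=
  F = (Finset.image (fun i : ℕ => s((0 : ZMod n), (i : ZMod n))) (Finset.Icc 2 (n - 2))) ∪
      {s((1 : ZMod n), (-1 : ZMod n))} ∨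
  ∃ k : ℕ, 2 ≤ k ∧ k ≤ n - 4 ∧
    (∀ i : ℕ, i < k → 2 ≤ deg n F (i : ZMod n) ∧
      s((i : ZMod n) - 1, (i : ZMod n) + 1) ∈ F) ∧
    (∀ i : ℕ, k ≤ i → i ≤ n - 1 → deg n F (i : ZMod n) = 1 ∧
      ∀ w : ZMod n, s((i : ZMod n), w) ∈ F → ¬ Pendant n F w) ∧
    (∀ u v i j : ZMod n, Pendant n F u → Pendant n F v →
      s(u, i) ∈ F → s(v, j) ∈ F → Cross n s(u, i) s(v, j) → i = j + 1 ∨ j = i + 1)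

/-- `F` has the configuration `F_n(*)`. -/
def IsFStar (n : ℕ) (F : Finset (Sym2 (ZMod n))) : Prop :=
  (∀ e ∈ F, ¬ e.IsDiag) ∧ NoIsolated n F ∧ F.card = n - 2 ∧
  ∃ φ : ZMod n → ZMod n, IsDihedral n φ ∧ FStarShape n (F.image (Sym2.map φ))

/-- Relabeling map after deleting the vertex `i`: the remaining `n - 1` vertices in their
induced cyclic order. -/
def delMap (n : ℕ) (i : ZMod n) (x : ZMod n) : ZMod (n - 1) :=
  (((x - i).val - 1 : ℕ) : ZMod (n - 1))

/-- `F` with the vertex `i` deleted, as an edge set on the remaining `n - 1` vertices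
in their induced cyclic order. -/
def delete (n : ℕ) (F : Finset (Sym2 (ZMod n))) (i : ZMod n) :
    Finset (Sym2 (ZMod (n - 1))) :=
  (F.filter (fun e => i ∉ e)).image (Sym2.map (delMap n i))

/-- `F` has the configuration `J_n(*)`. -/
def IsJStar (n : ℕ) (F : Finset (Sym2 (ZMod n))) : Prop :=
  (∀ e ∈ F, ¬ e.IsDiag) ∧ NoIsolated n F ∧ F.card = n - 1 ∧
  (∀ i : ZMod n, s(i - 1, i + 1) ∉ F → deg n F i ≤ 2) ∧
  (∀ i : ZMod n, s(i - 1, i + 1) ∉ F → deg n F i = 2 → IsFStar (n - 1) (delete n F i))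

/-- `J_{n,k}`: the set of vertices `v_i` of degree `k` in `F` with `v_{i-1}v_{i+1} ∉ F`. -/
def Jset (n k : ℕ) (F : Finset (Sym2 (ZMod n))) : Set (ZMod n) :=
  {i | deg n F i = k ∧ s(i - 1, i + 1) ∉ F}

/-- `F` is a configuration `J_n(*)` of Type-1. -/
def IsJStarType1 (n : ℕ) (F : Finset (Sym2 (ZMod n))) : Prop :=
  IsJStar n F ∧ Jset n 2 F = ∅ ∧ ∃ e ∈ F, IsFStar n (F.erase e)

/-- `F` is a configuration `J_n(*)` of Type-2. -/
def IsJStarType2 (n : ℕ) (F : Finset (Sym2 (ZMod n))) : Prop :=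
  IsJStar n F ∧ (Jset n 2 F).Nonempty ∧
  ∀ i ∈ Jset n 2 F, ∀ j₁ j₂ t w : ZMod n,
    s(i, j₁) ∈ F → s(i, j₂) ∈ F → j₁ ≠ j₂ →
    Pendant n F t → s(t, w) ∈ F →
    Cross n s(t, w) s(i, j₁) → Cross n s(t, w) s(i, j₂) →
    j₁ = w + 1 ∨ w = j₁ + 1 ∨ j₂ = w + 1 ∨ w = j₂ + 1

/-- A Hamiltonian cycle of the convex complete graph `K_n`, as an edge set. -/
def IsHamCycle (n : ℕ) (H : Finset (Sym2 (ZMod n))) : Prop :=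
  ∃ g : ZMod n ≃ ZMod n,
    H = Finset.image (fun i : ℕ => s(g (i : ZMod n), g ((i : ZMod n) + 1)))
      (Finset.range n) ∧ H.card = n

/-- A graph `G` is potentially triangulable in `K_n` if its vertices can be placed injectively
on the vertices of `K_n` so that `K_n` minus the image of the edge set of `G` admits a
triangulation. -/
def PotentiallyTriangulable {V : Type*} (G : SimpleGraph V) (n : ℕ) : Prop :=
  ∃ f : V → ZMod n, Function.Injective f ∧
    ∃ F' : Finset (Sym2 (ZMod n)),
      (F' : Set (Sym2 (ZMod n))) = Sym2.map f '' G.edgeSet ∧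
      AdmitsTriangulation n F'


def Fa : Finset (Sym2 (ZMod 7)) :=
  {s(0, 2), s(2, 4), s(4, 6), s(6, 1), s(1, 3), s(3, 5), s(5, 0)}

def Fb : Finset (Sym2 (ZMod 7)) :=
  {s(0, 3), s(3, 6), s(6, 2), s(2, 5), s(5, 1), s(1, 4), s(4, 0)}

def Fc : Finset (Sym2 (ZMod 7)) :=
  {s(0, 2), s(2, 6), s(6, 4), s(4, 1), s(1, 3), s(3, 5), s(5, 0)}

def Tc : Finset (Sym2 (ZMod 7)) :=
  {s(6, 1), s(1, 5), s(5, 2), s(2, 4)}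

instance (n : ℕ) (a b x : ZMod n) : Decidable (InOpenArc n a b x) := by
  unfold InOpenArc; infer_instance

/-- A quantifier-free version of `Cross` on representatives. -/
def CrossP (n : ℕ) (a b c d : ZMod n) : Prop :=
  (InOpenArc n a b c ∧ InOpenArc n b a d) ∨ (InOpenArc n b a c ∧ InOpenArc n a b d)

instance (n : ℕ) (a b c d : ZMod n) : Decidable (CrossP n a b c d) := by
  unfold CrossP; infer_instance

lemma cross_iff (n : ℕ) (a b c d : ZMod n) :
    Cross n s(a, b) s(c, d) ↔ CrossP n a b c d := by
  constructor
  · rintro ⟨a', b', c', d', he, hf, h1, h2⟩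
    rw [Sym2.eq_iff] at he hf
    rcases he with ⟨rfl, rfl⟩ | ⟨rfl, rfl⟩ <;> rcases hf with ⟨rfl, rfl⟩ | ⟨rfl, rfl⟩ <;>
      unfold CrossP <;> tauto
  · rintro (⟨h1, h2⟩ | ⟨h1, h2⟩)
    · exact ⟨a, b, c, d, rfl, rfl, h1, h2⟩
    · exact ⟨b, a, c, d, Sym2.eq_swap.symm, rfl, h1, h2⟩

instance (n : ℕ) (e f : Sym2 (ZMod n)) : Decidable (Cross n e f) :=
  e.recOnSubsingleton fun p₁ p₂ => f.recOnSubsingleton fun q₁ q₂ =>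
    decidable_of_iff (CrossP n p₁ p₂ q₁ q₂) (cross_iff n p₁ p₂ q₁ q₂).symm

instance (n : ℕ) [NeZero n] (e : Sym2 (ZMod n)) : Decidable (IsBoundary n e) := by
  unfold IsBoundary; infer_instance

instance (n : ℕ) [NeZero n] (e : Sym2 (ZMod n)) : Decidable (IsDiagonal n e) := by
  unfold IsDiagonal; infer_instance

def La : List (Sym2 (ZMod 7)) :=
  [s(0, 3), s(1, 4), s(2, 5), s(3, 6), s(4, 0), s(5, 1), s(6, 2)]

def Lb : List (Sym2 (ZMod 7)) :=
  [s(0, 2), s(1, 3), s(2, 4), s(3, 5), s(4, 6), s(5, 0), s(6, 1)]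

lemma key (F : Finset (Sym2 (ZMod 7))) (L : List (Sym2 (ZMod 7)))
    (hA : ∀ a b : ZMod 7, IsDiagonal 7 s(a, b) → s(a, b) ∉ F → s(a, b) ∈ L)
    (h : ∀ i j k l : Fin L.length,
      L.get i ≠ L.get j → L.get i ≠ L.get k → L.get i ≠ L.get l →
      L.get j ≠ L.get k → L.get j ≠ L.get l → L.get k ≠ L.get l →
      ¬ (∀ e ∈ ({L.get i, L.get j, L.get k, L.get l} : Finset (Sym2 (ZMod 7))),
          ∀ f ∈ ({L.get i, L.get j, L.get k, L.get l} : Finset (Sym2 (ZMod 7))),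
          ¬ Cross 7 e f)) :
    ¬ AdmitsTriangulation 7 F := by
  rintro ⟨-, T, hcard, hdiag, hnc, hnF⟩
  have hcard4 : T.card = 3 + 1 := hcard
  rw [Finset.card_eq_succ] at hcard4
  obtain ⟨x, t, hxt, rfl, ht3⟩ := hcard4
  rw [Finset.card_eq_three] at ht3
  obtain ⟨y, z, w, hyz, hyw, hzw, rfl⟩ := ht3
  have hmem : ∀ e ∈ insert x ({y, z, w} : Finset (Sym2 (ZMod 7))), e ∈ L := by
    intro e he
    induction e using Sym2.ind with
    | _ a b => exact hA a b (hdiag _ he) (hnF _ he)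
  have hx := hmem x (by simp)
  have hy := hmem y (by simp)
  have hz := hmem z (by simp)
  have hw := hmem w (by simp)
  rw [List.mem_iff_get] at hx hy hz hw
  obtain ⟨i, hi⟩ := hx; obtain ⟨j, hj⟩ := hy; obtain ⟨k, hk⟩ := hz; obtain ⟨l, hl⟩ := hw
  have hxy : x ≠ y := by rintro rfl; exact hxt (by simp)
  have hxz : x ≠ z := by rintro rfl; exact hxt (by simp)
  have hxw : x ≠ w := by rintro rfl; exact hxt (by simp)
  refine h i j k l ?_ ?_ ?_ ?_ ?_ ?_ ?_ <;>
    simp only [hi, hj, hk, hl]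
  · exact hxy
  · exact hxz
  · exact hxw
  · exact hyz
  · exact hyw
  · exact hzw
  · intro e he f hf
    exact hnc e (by simpa using he) f (by simpa using hf)

set_option maxRecDepth 10000 in
set_option maxHeartbeats 2000000 in
/-- In the convex `K_7`: the 7-cycles `v_0v_2v_4v_6v_1v_3v_5v_0` and
`v_0v_3v_6v_2v_5v_1v_4v_0` leave no triangulation, while `v_0v_2v_6v_4v_1v_3v_5v_0` does,
with `{v_6v_1, v_1v_5, v_5v_2, v_2v_4}` a set of 4 pairwise non-crossing diagonals
disjoint from it. -/
theorem stmt14 :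
    ¬ AdmitsTriangulation 7 Fa ∧
    ¬ AdmitsTriangulation 7 Fb ∧
    AdmitsTriangulation 7 Fc ∧
    Tc.card = 4 ∧ (∀ e ∈ Tc, IsDiagonal 7 e) ∧
    (∀ e ∈ Tc, ∀ f ∈ Tc, ¬ Cross 7 e f) ∧ (∀ e ∈ Tc, e ∉ Fc) := by
  refine ⟨key Fa La (by decide) (by decide), key Fb Lb (by decide) (by decide),
    ⟨by decide, Tc, by decide, by decide, by decide, by decide⟩,
    by decide, by decide, by decide, by decide⟩

end ConvexTri
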